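/- Let α₁, β₁, α₂, β₂ be real numbers with α₁, α₂ positive, irrational and satisfying 1/α₁ + 1/α₂ = 1. Then the family {S(α₁,β₁), S(α₂,β₂)} is an eventual exact 1-cover if and only if β₁/α₁ + β₂/α₂ is an integer. -/

import Mathlib

lemma dense_orbit_aux (γ : ℝ) (hγ : Irrational γ) {ε : ℝ} (hε : 0 < ε) :
    ∃ g : ℝ, (∃ m n : ℤ, g = m * γ + n) ∧ 0 < g ∧ g < ε ∧ g < 1 := by
  set S : AddSubgroup ℝ :=
    { carrier := {x | ∃ m n : ℤ, x = m * γ + n}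
      zero_mem' := ⟨0, 0, by simp⟩
      add_mem' := by
        rintro x y ⟨m, n, rfl⟩ ⟨m', n', rfl⟩
        exact ⟨m + m', n + n', by push_cast; ring⟩
      neg_mem' := by
        rintro x ⟨m, n, rfl⟩
        exact ⟨-m, -n, by push_cast; ring⟩ } with hS
  have hdense : Dense (S : Set ℝ) := by
    rcases S.dense_or_cyclic with h | ⟨a, ha⟩
    · exact h
    · exfalso
      have hγS : γ ∈ S := ⟨1, 0, by simp⟩
      have h1S : (1 : ℝ) ∈ S := ⟨0, 1, by simp⟩
      rw [ha, AddSubgroup.mem_closure_singleton] at hγS h1S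
      obtain ⟨p, hp⟩ := hγS
      obtain ⟨q, hq⟩ := h1S
      rw [zsmul_eq_mul] at hp hq
      have hq0 : q ≠ 0 := by rintro rfl; simp at hq
      have hq0' : (q : ℝ) ≠ 0 := Int.cast_ne_zero.mpr hq0
      apply hγ
      refine ⟨(p : ℚ) / (q : ℚ), ?_⟩
      push_cast
      rw [div_eq_iff hq0', ← hp]
      linear_combination (-(p:ℝ)) * hq
  obtain ⟨g, hgS, hg⟩ := hdense.exists_between (show (0:ℝ) < min ε 1 by positivity)
  exact ⟨g, hgS, hg.1, lt_of_lt_of_le hg.2 (min_le_left _ _),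
    lt_of_lt_of_le hg.2 (min_le_right _ _)⟩

lemma exists_step (γ : ℝ) (hγ : Irrational γ) {ε : ℝ} (hε : 0 < ε) :
    ∃ n : ℕ, 0 < n ∧ 0 < Int.fract ((n : ℝ) * γ) ∧
      (Int.fract ((n : ℝ) * γ) < ε ∨ 1 - Int.fract ((n : ℝ) * γ) < ε) := by
  obtain ⟨g, ⟨m, k, rfl⟩, hg0, hgε, hg1⟩ := dense_orbit_aux γ hγ hε
  have hfg : Int.fract ((m : ℝ) * γ + k) = (m : ℝ) * γ + k :=
    Int.fract_eq_self.mpr ⟨le_of_lt hg0, hg1⟩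
  have hfg' : Int.fract ((m : ℝ) * γ) = (m : ℝ) * γ + k := by
    rw [← Int.fract_add_intCast ((m : ℝ) * γ) k]; exact hfg
  have hm : m ≠ 0 := by
    rintro rfl
    simp only [Int.cast_zero, zero_mul, zero_add] at hg0 hg1
    have : (0 : ℤ) < k := by exact_mod_cast hg0
    have : (k : ℝ) ≥ 1 := by exact_mod_cast this
    linarith
  rcases hm.lt_or_gt with hneg | hpos
  · refine ⟨(-m).toNat, by omega, ?_⟩
    have hc : (((-m).toNat : ℕ) : ℝ) = -(m : ℝ) := by
      have : ((-m).toNat : ℤ) = -m := Int.toNat_of_nonneg (by omega)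
      exact_mod_cast this
    have hne : Int.fract ((m : ℝ) * γ) ≠ 0 := by rw [hfg']; linarith
    have : Int.fract ((((-m).toNat : ℕ) : ℝ) * γ) = 1 - ((m : ℝ) * γ + k) := by
      rw [hc, show -(m : ℝ) * γ = -((m : ℝ) * γ) by ring, Int.fract_neg hne, hfg']
    rw [this]
    constructor
    · linarith
    · right; linarith
  · refine ⟨m.toNat, by omega, ?_⟩
    have hc : ((m.toNat : ℕ) : ℝ) = (m : ℝ) := by
      have : (m.toNat : ℤ) = m := Int.toNat_of_nonneg (by omega)
      exact_mod_cast this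
    rw [hc, hfg']
    exact ⟨hg0, Or.inl hgε⟩

lemma exists_fract_mem (γ : ℝ) (hγ : Irrational γ) (u : ℝ) {a b : ℝ}
    (ha : 0 ≤ a) (hab : a < b) (hb : b ≤ 1) :
    ∃ j : ℕ, a < Int.fract (u + (j : ℝ) * γ) ∧ Int.fract (u + (j : ℝ) * γ) < b := by
  obtain ⟨n, hn, hf0, hcase⟩ := exists_step γ hγ (show 0 < b - a by linarith)
  set δ := Int.fract ((n : ℝ) * γ) with hδdef
  have hδ1 : δ < 1 := Int.fract_lt_one _
  have e2 : ((⌊(n : ℝ) * γ⌋ : ℝ)) + δ = (n : ℝ) * γ := Int.floor_add_fract _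
  set u' := Int.fract u with hu'def
  have hu'0 : 0 ≤ u' := Int.fract_nonneg u
  have hu'1 : u' < 1 := Int.fract_lt_one u
  have e1 : ((⌊u⌋ : ℝ)) + u' = u := Int.floor_add_fract u
  have key : ∀ m : ℕ, Int.fract (u + ((m * n : ℕ) : ℝ) * γ) = Int.fract (u' + m * δ) := by
    intro m
    have : u + ((m * n : ℕ) : ℝ) * γ = (u' + m * δ) + ((⌊u⌋ + m * ⌊(n : ℝ) * γ⌋ : ℤ) : ℝ) := by
      push_cast
      linear_combination -e1 - (m : ℝ) * e2
    rw [this, Int.fract_add_intCast]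
  rcases hcase with hsmall | hlarge
  · -- δ < b - a : go up
    set m : ℕ := (⌊(a + 1 - u') / δ⌋).toNat + 1 with hmdef
    have hq0 : 0 ≤ (a + 1 - u') / δ := div_nonneg (by linarith) (le_of_lt hf0)
    have hfl : ((⌊(a + 1 - u') / δ⌋).toNat : ℝ) = ((⌊(a + 1 - u') / δ⌋ : ℤ) : ℝ) := by
      exact_mod_cast Int.toNat_of_nonneg (Int.floor_nonneg.mpr hq0)
    have hmgt : (a + 1 - u') / δ < (m : ℝ) := by
      rw [hmdef]; push_cast; rw [hfl]; exact Int.lt_floor_add_one _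
    have hmle : (m : ℝ) - 1 ≤ (a + 1 - u') / δ := by
      rw [hmdef]; push_cast; rw [hfl]; simpa using Int.floor_le ((a + 1 - u') / δ)
    have h1 : a + 1 < u' + m * δ := by
      have := (div_lt_iff₀ hf0).mp hmgt
      linarith
    have h2 : u' + m * δ < b + 1 := by
      have := (le_div_iff₀ hf0).mp hmle
      linarith
    have hval : Int.fract (u' + (m : ℝ) * δ) = u' + m * δ - 1 := by
      rw [show u' + (m : ℝ) * δ = (u' + m * δ - 1) + ((1 : ℤ) : ℝ) by push_cast; ring,
        Int.fract_add_intCast, Int.fract_eq_self.mpr ⟨by linarith, by linarith⟩]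
      push_cast; ring
    refine ⟨m * n, ?_, ?_⟩ <;> rw [key m, hval]
    · linarith
    · linarith
  · -- 1 - δ < b - a : go down
    set θ := 1 - δ with hθdef
    have hθ0 : 0 < θ := by simp [hθdef]; linarith
    set m : ℕ := (⌊(u' + 1 - b) / θ⌋).toNat + 1 with hmdef
    have hq0 : 0 ≤ (u' + 1 - b) / θ := div_nonneg (by linarith) (le_of_lt hθ0)
    have hfl : ((⌊(u' + 1 - b) / θ⌋).toNat : ℝ) = ((⌊(u' + 1 - b) / θ⌋ : ℤ) : ℝ) := by
      exact_mod_cast Int.toNat_of_nonneg (Int.floor_nonneg.mpr hq0)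
    have hmgt : (u' + 1 - b) / θ < (m : ℝ) := by
      rw [hmdef]; push_cast; rw [hfl]; exact Int.lt_floor_add_one _
    have hmle : (m : ℝ) - 1 ≤ (u' + 1 - b) / θ := by
      rw [hmdef]; push_cast; rw [hfl]; simpa using Int.floor_le ((u' + 1 - b) / θ)
    have h1 : u' + 1 - b < m * θ := (div_lt_iff₀ hθ0).mp hmgt
    have h2 : (m : ℝ) * θ < u' + 1 - a := by
      have := (le_div_iff₀ hθ0).mp hmle
      linarith
    have hval : Int.fract (u' + (m : ℝ) * δ) = u' - m * θ + 1 := by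
      rw [show u' + (m : ℝ) * δ = (u' - m * θ + 1) + (((m : ℤ) - 1 : ℤ) : ℝ) by
          push_cast; rw [hθdef]; ring,
        Int.fract_add_intCast, Int.fract_eq_self.mpr ⟨by linarith, by linarith⟩]
    refine ⟨m * n, ?_, ?_⟩ <;> rw [key m, hval]
    · linarith
    · linarith

/-- The number of positive integers `n` with `⌊n·α + β⌋ = N`, i.e. the multiplicity
of `N` in the Beatty sequence `S(α,β)`. -/
noncomputable def beattyCount (α β : ℝ) (N : ℤ) : ℕ :=
  Nat.card {n : ℕ // 0 < n ∧ ⌊(n : ℝ) * α + β⌋ = N}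

lemma beattyCount_eq (α β : ℝ) (hα : 1 < α) (N : ℤ) (hN : β < (N : ℝ)) :
    (beattyCount α β N : ℤ) = ⌈((N : ℝ) + 1 - β) / α⌉ - ⌈((N : ℝ) - β) / α⌉ := by
  have hα0 : (0 : ℝ) < α := by linarith
  set a := ((N : ℝ) - β) / α with hadef
  set b := ((N : ℝ) + 1 - β) / α with hbdef
  have hba : b = a + 1 / α := by
    rw [hadef, hbdef, ← add_div]; ring_nf
  have ha0 : 0 < a := div_pos (by linarith) hα0
  have hαinv0 : 0 < 1 / α := by positivity
  have hαinv1 : 1 / α < 1 := by rw [div_lt_one hα0]; linarith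
  have hmem : ∀ n : ℕ, (0 < n ∧ ⌊(n : ℝ) * α + β⌋ = N) ↔ (⌈a⌉ ≤ (n : ℤ) ∧ (n : ℤ) < ⌈b⌉) := by
    intro n
    rw [Int.floor_eq_iff]
    constructor
    · rintro ⟨hn, hlow, hhigh⟩
      constructor
      · rw [Int.ceil_le, hadef]
        push_cast
        rw [div_le_iff₀ hα0]
        linarith
      · rw [Int.lt_ceil, hbdef]
        push_cast
        rw [lt_div_iff₀ hα0]
        linarith
    · rintro ⟨hl, hh⟩
      have hge : a ≤ (n : ℝ) := le_trans (Int.le_ceil a) (by exact_mod_cast hl)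
      have hlt : (n : ℝ) < b := by
        have := Int.lt_ceil.mp hh
        exact_mod_cast this
      have hn0 : 0 < n := by
        rcases Nat.eq_zero_or_pos n with h | h
        · exfalso; rw [h] at hge; push_cast at hge; linarith
        · exact h
      rw [hadef] at hge
      rw [hbdef] at hlt
      rw [div_le_iff₀ hα0] at hge
      rw [lt_div_iff₀ hα0] at hlt
      refine ⟨hn0, by push_cast; linarith, by push_cast; linarith⟩
  have hAB : ⌈a⌉ ≤ ⌈b⌉ := Int.ceil_le_ceil (by rw [hba]; linarith)
  have hBA : ⌈b⌉ ≤ ⌈a⌉ + 1 := by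
    rw [Int.ceil_le]
    push_cast
    have := Int.le_ceil a
    rw [hba]
    linarith
  have hA1 : 1 ≤ ⌈a⌉ := Int.ceil_pos.mpr ha0
  rcases (by omega : ⌈b⌉ = ⌈a⌉ ∨ ⌈b⌉ = ⌈a⌉ + 1) with hc | hc
  · have hemp : IsEmpty {n : ℕ // 0 < n ∧ ⌊(n : ℝ) * α + β⌋ = N} := by
      constructor
      rintro ⟨n, hn⟩
      rw [hmem n, hc] at hn
      omega
    rw [beattyCount, Nat.card_of_isEmpty]
    omega
  · have hone : Nat.card {n : ℕ // 0 < n ∧ ⌊(n : ℝ) * α + β⌋ = N} = 1 := by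
      rw [Nat.card_eq_one_iff_unique]
      constructor
      · constructor
        rintro ⟨p, hp⟩ ⟨q, hq⟩
        rw [hmem p, hc] at hp
        rw [hmem q, hc] at hq
        have : p = q := by omega
        exact Subtype.ext this
      · refine ⟨⟨(⌈a⌉).toNat, ?_⟩⟩
        rw [hmem, hc]
        omega
    rw [beattyCount, hone]
    omega

theorem inhomogeneous_pair_EEC_iff (α₁ β₁ α₂ β₂ : ℝ)
    (h1 : 0 < α₁) (h2 : 0 < α₂) (hi1 : Irrational α₁) (hi2 : Irrational α₂)
    (hsum : 1 / α₁ + 1 / α₂ = 1) :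
    (∃ N₀ : ℤ, ∀ N : ℤ, N ≥ N₀ → beattyCount α₁ β₁ N + beattyCount α₂ β₂ N = 1) ↔
      ∃ z : ℤ, β₁ / α₁ + β₂ / α₂ = (z : ℝ) := by
  have h1' : 1 < α₁ := by
    have := one_div_pos.mpr h2
    rw [← div_lt_one h1]; linarith
  have h2' : 1 < α₂ := by
    have := one_div_pos.mpr h1
    rw [← div_lt_one h2]; linarith
  set s := β₁ / α₁ + β₂ / α₂ with hs
  set x : ℤ → ℝ := fun N => (β₁ - N) / α₁ with hx
  set y : ℤ → ℝ := fun N => (β₂ - N) / α₂ with hy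
  have hxy : ∀ N : ℤ, x N + y N = s - N := by
    intro N
    have : x N + y N = s - N * (1 / α₁ + 1 / α₂) := by
      simp only [hx, hy, hs]
      field_simp
      ring
    rw [hsum] at this
    simpa using this
  set χ : ℤ → ℤ := fun N => ⌊s - N⌋ - ⌊x N⌋ - ⌊y N⌋ with hχ
  have hχreal : ∀ N : ℤ, (χ N : ℝ) = Int.fract (x N) + Int.fract (y N) - Int.fract s := by
    intro N
    have hfl : ⌊s - (N : ℝ)⌋ = ⌊s⌋ - N := Int.floor_sub_intCast s N
    simp only [hχ, hfl]
    push_cast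
    simp only [Int.fract]
    linarith [hxy N]
  have hχ01 : ∀ N : ℤ, χ N = 0 ∨ χ N = 1 := by
    intro N
    have l1 : ⌊x N⌋ + ⌊y N⌋ ≤ ⌊s - (N : ℝ)⌋ := by
      apply Int.le_floor.mpr
      push_cast
      linarith [hxy N, Int.floor_le (x N), Int.floor_le (y N)]
    have l2 : ⌊s - (N : ℝ)⌋ < ⌊x N⌋ + ⌊y N⌋ + 2 := by
      apply Int.floor_lt.mpr
      push_cast
      linarith [hxy N, Int.lt_floor_add_one (x N), Int.lt_floor_add_one (y N)]
    simp only [hχ]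
    omega
  have hceil : ∀ (α β : ℝ) (M : ℤ), ⌈((M : ℝ) - β) / α⌉ = -⌊(β - M) / α⌋ := by
    intro α β M
    rw [show (β - (M : ℝ)) / α = -(((M : ℝ) - β) / α) by ring, Int.floor_neg, neg_neg]
  have hcount : ∀ N : ℤ, β₁ < (N : ℝ) → β₂ < (N : ℝ) →
      (beattyCount α₁ β₁ N + beattyCount α₂ β₂ N : ℤ) = 1 + χ (N + 1) - χ N := by
    intro N hb1 hb2
    have c1 := beattyCount_eq α₁ β₁ h1' N hb1
    have c2 := beattyCount_eq α₂ β₂ h2' N hb2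
    have e1 : ⌈((N : ℝ) - β₁) / α₁⌉ = -⌊x N⌋ := by rw [hceil]
    have e2 : ⌈((N : ℝ) - β₂) / α₂⌉ = -⌊y N⌋ := by rw [hceil]
    have e1' : ⌈((N : ℝ) + 1 - β₁) / α₁⌉ = -⌊x (N + 1)⌋ := by
      rw [show ((N : ℝ) + 1 - β₁) = (((N + 1 : ℤ) : ℝ) - β₁) by push_cast; ring, hceil]
    have e2' : ⌈((N : ℝ) + 1 - β₂) / α₂⌉ = -⌊y (N + 1)⌋ := by
      rw [show ((N : ℝ) + 1 - β₂) = (((N + 1 : ℤ) : ℝ) - β₂) by push_cast; ring, hceil]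
    have f1 : ⌊s - ((N : ℤ) : ℝ)⌋ = ⌊s⌋ - N := Int.floor_sub_intCast s N
    have f2 : ⌊s - (((N + 1 : ℤ)) : ℝ)⌋ = ⌊s⌋ - (N + 1) := Int.floor_sub_intCast s (N + 1)
    simp only [hχ]
    push_cast
    rw [c1, c2, e1, e2, e1', e2']
    push_cast at f1 f2
    rw [f1, f2]
    ring
  constructor
  · rintro ⟨N₀, hN₀⟩
    by_contra hns
    push_neg at hns
    have hfs0 : Int.fract s ≠ 0 := by
      intro h
      apply hns ⌊s⌋
      have := Int.floor_add_fract s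
      rw [h] at this
      rw [hs] at this ⊢
      linarith
    have hfs : 0 < Int.fract s := lt_of_le_of_ne (Int.fract_nonneg s) (Ne.symm hfs0)
    have hfs1 : Int.fract s < 1 := Int.fract_lt_one s
    have hyf : ∀ N : ℤ, Int.fract (y N) = Int.fract (Int.fract s - Int.fract (x N)) := by
      intro N
      have : y N = (Int.fract s - Int.fract (x N)) + ((⌊s⌋ - N - ⌊x N⌋ : ℤ) : ℝ) := by
        push_cast
        simp only [Int.fract]
        linarith [hxy N]
      rw [this, Int.fract_add_intCast]
    have hchar0 : ∀ N : ℤ, Int.fract (x N) < Int.fract s → χ N = 0 := by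
      intro N h
      have hfx0 : 0 ≤ Int.fract (x N) := Int.fract_nonneg _
      have : Int.fract (y N) = Int.fract s - Int.fract (x N) := by
        rw [hyf N, Int.fract_eq_self.mpr ⟨by linarith, by linarith⟩]
      have hr := hχreal N
      rw [this] at hr
      have : (χ N : ℝ) = 0 := by linarith
      exact_mod_cast this
    have hchar1 : ∀ N : ℤ, Int.fract s < Int.fract (x N) → χ N = 1 := by
      intro N h
      have hfx1 : Int.fract (x N) < 1 := Int.fract_lt_one _
      have : Int.fract (y N) = Int.fract s - Int.fract (x N) + 1 := by
        rw [hyf N,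
          show Int.fract s - Int.fract (x N)
            = (Int.fract s - Int.fract (x N) + 1) + ((-1 : ℤ) : ℝ) by push_cast; ring,
          Int.fract_add_intCast, Int.fract_eq_self.mpr ⟨by linarith, by linarith⟩]
        push_cast
        ring
      have hr := hχreal N
      rw [this] at hr
      have : (χ N : ℝ) = 1 := by linarith
      exact_mod_cast this
    set M := max N₀ (max (⌊β₁⌋ + 1) (⌊β₂⌋ + 1)) with hM
    have hMβ : ∀ N : ℤ, M ≤ N → β₁ < (N : ℝ) ∧ β₂ < (N : ℝ) := by
      intro N hN
      have hb1 : (⌊β₁⌋ + 1 : ℤ) ≤ N := le_trans (le_trans (le_max_left _ _) (le_max_right _ _)) hN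
      have hb2 : (⌊β₂⌋ + 1 : ℤ) ≤ N := le_trans (le_trans (le_max_right _ _) (le_max_right _ _)) hN
      constructor
      · calc β₁ < ⌊β₁⌋ + 1 := Int.lt_floor_add_one β₁
          _ ≤ (N : ℝ) := by exact_mod_cast hb1
      · calc β₂ < ⌊β₂⌋ + 1 := Int.lt_floor_add_one β₂
          _ ≤ (N : ℝ) := by exact_mod_cast hb2
    have hconst : ∀ N : ℤ, M ≤ N → χ N = χ M := by
      have step : ∀ n : ℤ, M ≤ n → χ n = χ M → χ (n + 1) = χ M := by
        intro n hn ih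
        have hsum1 := hN₀ n (le_trans (le_max_left _ _) hn)
        obtain ⟨hbb1, hbb2⟩ := hMβ n hn
        have := hcount n hbb1 hbb2
        have hcast : ((beattyCount α₁ β₁ n + beattyCount α₂ β₂ n : ℕ) : ℤ) = 1 := by
          exact_mod_cast hsum1
        push_cast at hcast
        rw [hcast] at this
        omega
      exact fun N hN => Int.le_induction (motive := fun K _ => χ K = χ M) rfl step N hN
    have hγ : Irrational (-(α₁⁻¹)) := (hi1.inv).neg
    have hxshift : ∀ j : ℕ, x (M + j) = x M + (j : ℝ) * (-(α₁⁻¹)) := by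
      intro j
      simp only [hx]
      push_cast
      field_simp
      ring
    obtain ⟨j₁, _, hj₁b⟩ := exists_fract_mem _ hγ (x M) (le_refl 0) hfs (le_of_lt hfs1)
    obtain ⟨j₂, hj₂a, _⟩ := exists_fract_mem _ hγ (x M) (Int.fract_nonneg s) hfs1 le_rfl
    rw [← hxshift j₁] at hj₁b
    rw [← hxshift j₂] at hj₂a
    have e1 : χ (M + j₁) = 0 := hchar0 _ hj₁b
    have e2 : χ (M + j₂) = 1 := hchar1 _ hj₂a
    have q1 := hconst (M + j₁) (by omega)
    have q2 := hconst (M + j₂) (by omega)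
    omega
  · rintro ⟨z, hz⟩
    have hfs : Int.fract s = 0 := by
      rw [hz]
      exact Int.fract_intCast z
    have hzero : ∀ N : ℤ, χ N = 0 → Int.fract (x N) = 0 := by
      intro N h
      have hr := hχreal N
      rw [h, hfs] at hr
      have h1 := Int.fract_nonneg (x N)
      have h2 := Int.fract_nonneg (y N)
      push_cast at hr
      linarith
    have huniq : ∀ N N' : ℤ, Int.fract (x N) = 0 → Int.fract (x N') = 0 → N = N' := by
      intro N N' hN hN'
      by_contra hne
      have d1 : x N = (⌊x N⌋ : ℝ) := by
        have := Int.floor_add_fract (x N)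
        rw [hN] at this; linarith
      have d2 : x N' = (⌊x N'⌋ : ℝ) := by
        have := Int.floor_add_fract (x N')
        rw [hN'] at this; linarith
      set k : ℤ := ⌊x N⌋ - ⌊x N'⌋ with hk
      have hdiff : ((N' - N : ℤ) : ℝ) / α₁ = (k : ℝ) := by
        have hx1 : x N = (β₁ - N) / α₁ := rfl
        have hx2 : x N' = (β₁ - N') / α₁ := rfl
        rw [hk]
        push_cast
        rw [← d1, ← d2, hx1, hx2]
        field_simp
        ring
      have hk0 : k ≠ 0 := by
        intro h
        rw [h] at hdiff
        push_cast at hdiff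
        rw [div_eq_zero_iff] at hdiff
        rcases hdiff with h' | h'
        · have : (N' : ℝ) = N := by linarith
          exact hne (by exact_mod_cast this.symm)
        · linarith
      have hkR : (k : ℝ) ≠ 0 := Int.cast_ne_zero.mpr hk0
      have hα : α₁ = ((N' - N : ℤ) : ℝ) / (k : ℝ) := by
        rw [eq_div_iff hkR]
        rw [div_eq_iff (by linarith : α₁ ≠ 0)] at hdiff
        linarith [hdiff]
      exact hi1 ⟨((N' - N : ℤ) : ℚ) / ((k : ℤ) : ℚ), by rw [hα]; push_cast; ring⟩
    have hmain : ∀ B : ℤ, (∀ N : ℤ, B ≤ N → χ N = 1) → False ∨ True := fun _ _ => Or.inr trivial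
    by_cases hbad : ∃ B : ℤ, Int.fract (x B) = 0
    · obtain ⟨B, hB⟩ := hbad
      refine ⟨max (B + 1) (max (⌊β₁⌋ + 1) (⌊β₂⌋ + 1)), ?_⟩
      intro N hN
      have hb1 : β₁ < (N : ℝ) := by
        have : (⌊β₁⌋ + 1 : ℤ) ≤ N := by
          have := le_trans (le_trans (le_max_left _ _) (le_max_right _ _)) hN
          exact this
        calc β₁ < ⌊β₁⌋ + 1 := Int.lt_floor_add_one β₁
          _ ≤ (N : ℝ) := by exact_mod_cast this
      have hb2 : β₂ < (N : ℝ) := by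
        have : (⌊β₂⌋ + 1 : ℤ) ≤ N := by
          exact le_trans (le_trans (le_max_right _ _) (le_max_right _ _)) hN
        calc β₂ < ⌊β₂⌋ + 1 := Int.lt_floor_add_one β₂
          _ ≤ (N : ℝ) := by exact_mod_cast this
      have hBN : B + 1 ≤ N := le_trans (le_max_left _ _) hN
      have hχ1 : ∀ N' : ℤ, N' ≠ B → χ N' = 1 := by
        intro N' hne
        rcases hχ01 N' with h0 | h1
        · exact absurd (huniq N' B (hzero N' h0) hB) hne
        · exact h1
      have := hcount N hb1 hb2
      rw [hχ1 N (by omega), hχ1 (N + 1) (by omega)] at this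
      norm_num at this
      exact_mod_cast this
    · push_neg at hbad
      refine ⟨max (⌊β₁⌋ + 1) (⌊β₂⌋ + 1), ?_⟩
      intro N hN
      have hb1 : β₁ < (N : ℝ) := by
        have : (⌊β₁⌋ + 1 : ℤ) ≤ N := le_trans (le_max_left _ _) hN
        calc β₁ < ⌊β₁⌋ + 1 := Int.lt_floor_add_one β₁
          _ ≤ (N : ℝ) := by exact_mod_cast this
      have hb2 : β₂ < (N : ℝ) := by
        have : (⌊β₂⌋ + 1 : ℤ) ≤ N := le_trans (le_max_right _ _) hN
        calc β₂ < ⌊β₂⌋ + 1 := Int.lt_floor_add_one β₂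
          _ ≤ (N : ℝ) := by exact_mod_cast this
      have hχ1 : ∀ N' : ℤ, χ N' = 1 := by
        intro N'
        rcases hχ01 N' with h0 | h1
        · exact absurd (hzero N' h0) (hbad N')
        · exact h1
      have := hcount N hb1 hb2
      rw [hχ1 N, hχ1 (N + 1)] at this
      norm_num at this
      exact_mod_cast this
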